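/- Let λ: Ĝ → G be a surjective homomorphism of groups, let A be an abelian group (written additively, with trivial group actions), and let n ≥ 1. Then pullback along λ, sending θ: Gⁿ → A to λ*θ := θ ∘ (λ × ⋯ × λ): Ĝⁿ → A, is a bijection from the set of n-cocycles θ on G satisfying θ(g₁, …, g_n) = 0 whenever g_i = 1 for some i, onto the set of n-cocycles c on Ĝ satisfying c(ĝ₁, …, ĝ_n) = 0 whenever ĝ_i ∈ ker λ for some i. -/

import Mathlib

/-- The differential of (inhomogeneous) group cochains with values in an abelian group with
trivial action: `(δc)(h₁, …, h_{n+1}) = c(h₂, …, h_{n+1})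
+ ∑_{i=1}^{n} (−1)ⁱ c(h₁, …, h_i h_{i+1}, …, h_{n+1}) + (−1)^{n+1} c(h₁, …, h_n)`. -/
def cochainD {H : Type*} [Group H] {A : Type*} [AddCommGroup A] (n : ℕ)
    (c : (Fin n → H) → A) : (Fin (n + 1) → H) → A :=
  fun h =>
    c (fun i => h i.succ)
      + ∑ j : Fin n, ((-1 : ℤ) ^ (j.val + 1)) • c (Fin.contractNth j.castSucc (· * ·) h)
      + ((-1 : ℤ) ^ (n + 1)) • c (fun i => h i.castSucc)

section Aux
variable {Ghat G : Type*} [Group Ghat] [Group G] {A : Type*} [AddCommGroup A]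

lemma neg_one_pow_smul_cancel (m : ℕ) {x y : A}
    (h : ((-1:ℤ)^m) • x = ((-1:ℤ)^m) • y) : x = y := by
  have h2 := congrArg (fun a : A => ((-1:ℤ)^m) • a) h
  simp only [smul_smul, ← pow_add] at h2
  rwa [Even.neg_one_pow ⟨m, rfl⟩, one_smul, one_smul] at h2

lemma step_last (lam : Ghat →* G) {n : ℕ} (c : (Fin n → Ghat) → A)
    (hc : cochainD n c = 0)
    (hv : ∀ h : Fin n → Ghat, (∃ i, h i ∈ lam.ker) → c h = 0)
    (j : Fin n) (hj : j.val + 1 = n) (z : Ghat) (hz : z ∈ lam.ker)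
    (h : Fin n → Ghat) :
    c (Function.update h j (h j * z)) = c h := by
  have hjn : j.val < n := j.isLt
  set t : Fin (n+1) → Ghat := fun k =>
    if hk : k.val < j.val + 1 then h ⟨k.val, by omega⟩
    else if k.val = j.val + 1 then z else h ⟨k.val - 1, by omega⟩ with htdef
  have htval : ∀ (v : ℕ) (hv1 : v < n + 1), t ⟨v, hv1⟩ =
      if hk : v < j.val + 1 then h ⟨v, by omega⟩
      else if v = j.val + 1 then z else h ⟨v - 1, by omega⟩ := fun v hv1 => rfl
  have htz : t ⟨j.val + 1, by omega⟩ = z := by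
    rw [htval]; rw [dif_neg (by omega), if_pos rfl]
  have htlt : ∀ (v : ℕ) (hv1 : v < n + 1) (hv2 : v < j.val + 1),
      t ⟨v, hv1⟩ = h ⟨v, by omega⟩ := by
    intro v hv1 hv2; rw [htval]; rw [dif_pos hv2]
  have hteq := congrFun hc t
  rw [Pi.zero_apply] at hteq
  simp only [cochainD] at hteq
  have h1 : c (fun i : Fin n => t i.succ) = 0 := by
    apply hv
    refine ⟨⟨j.val, hjn⟩, ?_⟩
    have e : (⟨j.val, hjn⟩ : Fin n).succ = (⟨j.val + 1, by omega⟩ : Fin (n+1)) := rfl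
    show t (⟨j.val, hjn⟩ : Fin n).succ ∈ lam.ker
    rw [show t (⟨j.val, hjn⟩ : Fin n).succ = t ⟨j.val + 1, by omega⟩ from rfl, htz]
    exact hz
  have h3 : (fun i : Fin n => t i.castSucc) = h := by
    funext i
    have e : i.castSucc = (⟨i.val, by omega⟩ : Fin (n+1)) := rfl
    show t i.castSucc = h i
    rw [e, htlt i.val (by omega) (by omega)]
  have hcontj : Fin.contractNth j.castSucc (· * ·) t = Function.update h j (h j * z) := by
    funext k
    rcases lt_trichotomy k.val j.val with hk | hk | hk
    · rw [Fin.contractNth_apply_of_lt _ _ _ _ (by simpa using hk)]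
      have e : k.castSucc = (⟨k.val, by omega⟩ : Fin (n+1)) := rfl
      rw [e, htlt k.val (by omega) (by omega)]
      rw [Function.update_of_ne (fun hkj => by subst hkj; omega)]
    · have hkj : k = j := Fin.ext hk
      subst hkj
      rw [Fin.contractNth_apply_of_eq _ _ _ _ (by simp)]
      have e1 : k.castSucc = (⟨k.val, by omega⟩ : Fin (n+1)) := rfl
      have e2 : k.succ = (⟨k.val + 1, by omega⟩ : Fin (n+1)) := rfl
      rw [e1, e2, htlt k.val (by omega) (by omega), htz, Function.update_self]
    · exact absurd hk (by omega)
  have hsum : ∑ i : Fin n, ((-1 : ℤ) ^ (i.val + 1)) • c (Fin.contractNth i.castSucc (· * ·) t)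
      = ((-1 : ℤ) ^ (j.val + 1)) • c (Function.update h j (h j * z)) := by
    rw [Finset.sum_eq_single_of_mem j (Finset.mem_univ j)]
    · rw [hcontj]
    · intro i _ hij
      have hij' : i.val < j.val := by
        have h1 := i.isLt; have h2 := Fin.val_ne_of_ne hij; omega
      have hz0 : c (Fin.contractNth i.castSucc (· * ·) t) = 0 := by
        apply hv
        refine ⟨⟨j.val, hjn⟩, ?_⟩
        rw [Fin.contractNth_apply_of_gt _ _ _ _ (by simpa using hij')]
        rw [show t ((⟨j.val, hjn⟩ : Fin n)).succ = t ⟨j.val + 1, by omega⟩ from rfl, htz]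
        exact hz
      rw [hz0, smul_zero]
  rw [h1, h3, hsum, hj, zero_add] at hteq
  apply neg_one_pow_smul_cancel n
  have hpow : ((-1:ℤ))^(n+1) = -((-1:ℤ))^n := by ring
  rw [hpow, neg_smul, add_neg_eq_zero] at hteq
  exact hteq

lemma step_lt (lam : Ghat →* G) {n : ℕ} (c : (Fin n → Ghat) → A)
    (hc : cochainD n c = 0)
    (hv : ∀ h : Fin n → Ghat, (∃ i, h i ∈ lam.ker) → c h = 0)
    (j : Fin n) (hj : j.val + 1 < n) (z : Ghat) (hz : z ∈ lam.ker)
    (h : Fin n → Ghat) :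
    c (Function.update h j (h j * z))
      = c (Function.update h ⟨j.val + 1, hj⟩ (z * h ⟨j.val + 1, hj⟩)) := by
  have hjn : j.val < n := j.isLt
  set j' : Fin n := ⟨j.val + 1, hj⟩ with hj'def
  set t : Fin (n+1) → Ghat := fun k =>
    if hk : k.val < j.val + 1 then h ⟨k.val, by omega⟩
    else if k.val = j.val + 1 then z else h ⟨k.val - 1, by omega⟩ with htdef
  have htval : ∀ (v : ℕ) (hv1 : v < n + 1), t ⟨v, hv1⟩ =
      if hk : v < j.val + 1 then h ⟨v, by omega⟩
      else if v = j.val + 1 then z else h ⟨v - 1, by omega⟩ := fun v hv1 => rfl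
  have htz : t ⟨j.val + 1, by omega⟩ = z := by
    rw [htval]; rw [dif_neg (by omega), if_pos rfl]
  have htlt : ∀ (v : ℕ) (hv1 : v < n + 1) (hv2 : v < j.val + 1),
      t ⟨v, hv1⟩ = h ⟨v, by omega⟩ := by
    intro v hv1 hv2; rw [htval]; rw [dif_pos hv2]
  have htgt : ∀ (v : ℕ) (hv1 : v < n + 1) (hv2 : j.val + 1 < v),
      t ⟨v, hv1⟩ = h ⟨v - 1, by omega⟩ := by
    intro v hv1 hv2; rw [htval]; rw [dif_neg (by omega), if_neg (by omega)]
  have hteq := congrFun hc t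
  rw [Pi.zero_apply] at hteq
  simp only [cochainD] at hteq
  have h1 : c (fun i : Fin n => t i.succ) = 0 := by
    apply hv
    refine ⟨⟨j.val, hjn⟩, ?_⟩
    show t (⟨j.val, hjn⟩ : Fin n).succ ∈ lam.ker
    rw [show t (⟨j.val, hjn⟩ : Fin n).succ = t ⟨j.val + 1, by omega⟩ from rfl, htz]
    exact hz
  have h3 : c (fun i : Fin n => t i.castSucc) = 0 := by
    apply hv
    refine ⟨j', ?_⟩
    show t (j' : Fin n).castSucc ∈ lam.ker
    rw [show t (j' : Fin n).castSucc = t ⟨j.val + 1, by omega⟩ from rfl, htz]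
    exact hz
  have hcontj : Fin.contractNth j.castSucc (· * ·) t = Function.update h j (h j * z) := by
    funext k
    rcases lt_trichotomy k.val j.val with hk | hk | hk
    · rw [Fin.contractNth_apply_of_lt _ _ _ _ (by simpa using hk)]
      have e : k.castSucc = (⟨k.val, by omega⟩ : Fin (n+1)) := rfl
      rw [e, htlt k.val (by omega) (by omega)]
      rw [Function.update_of_ne (fun hkj => by subst hkj; omega)]
    · have hkj : k = j := Fin.ext hk
      subst hkj
      rw [Fin.contractNth_apply_of_eq _ _ _ _ (by simp)]
      have e1 : k.castSucc = (⟨k.val, by omega⟩ : Fin (n+1)) := rfl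
      have e2 : k.succ = (⟨k.val + 1, by omega⟩ : Fin (n+1)) := rfl
      rw [e1, e2, htlt k.val (by omega) (by omega), htz, Function.update_self]
    · rw [Fin.contractNth_apply_of_gt _ _ _ _ (by simpa using hk)]
      have e : k.succ = (⟨k.val + 1, by omega⟩ : Fin (n+1)) := rfl
      rw [e, htgt (k.val + 1) (by omega) (by omega)]
      rw [Function.update_of_ne (fun hkj => by subst hkj; omega)]
      exact congrArg h (Fin.ext (by simp))
  have hcontj' : Fin.contractNth j'.castSucc (· * ·) t
      = Function.update h j' (z * h j') := by
    funext k
    rcases lt_trichotomy k.val j'.val with hk | hk | hk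
    · have hk' : k.val < j.val + 1 := hk
      rw [Fin.contractNth_apply_of_lt _ _ _ _ (by simpa using hk)]
      have e : k.castSucc = (⟨k.val, by omega⟩ : Fin (n+1)) := rfl
      rw [e, htlt k.val (by omega) hk']
      rw [Function.update_of_ne (fun hkj => by subst hkj; exact absurd hk (lt_irrefl _))]
    · have hkv : k.val = j.val + 1 := hk
      have hkj : k = j' := Fin.ext hk
      rw [Fin.contractNth_apply_of_eq _ _ _ _ (by show k.val = j.val + 1; exact hkv)]
      have e1 : k.castSucc = (⟨j.val + 1, by omega⟩ : Fin (n+1)) := Fin.ext hkv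
      have e2 : k.succ = (⟨k.val + 1, by omega⟩ : Fin (n+1)) := rfl
      rw [e1, e2, htz, htgt (k.val + 1) (by omega) (by omega),
        show Function.update h j' (z * h j') k = z * h j' from by
          rw [hkj, Function.update_self]]
      exact congrArg (z * h ·) (Fin.ext (by simp [← hkj, hkv]))
    · rw [Fin.contractNth_apply_of_gt _ _ _ _ (by simpa using hk)]
      have hk' : j.val + 1 < k.val := hk
      have e : k.succ = (⟨k.val + 1, by omega⟩ : Fin (n+1)) := rfl
      rw [e, htgt (k.val + 1) (by omega) (by omega)]
      rw [Function.update_of_ne (fun hkj => by subst hkj; exact absurd hk (lt_irrefl _))]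
      exact congrArg h (Fin.ext (by simp))
  have hsum : ∑ i : Fin n, ((-1 : ℤ) ^ (i.val + 1)) • c (Fin.contractNth i.castSucc (· * ·) t)
      = ((-1 : ℤ) ^ (j.val + 1)) • c (Function.update h j (h j * z))
        + ((-1 : ℤ) ^ (j'.val + 1)) • c (Function.update h j' (z * h j')) := by
    rw [Finset.sum_eq_add_of_mem j j' (Finset.mem_univ j) (Finset.mem_univ j')
      (Fin.ne_of_val_ne (Nat.ne_of_lt (Nat.lt_succ_self _))) ?side]
    · rw [hcontj, hcontj']
    case side =>
      intro i _ hi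
      obtain ⟨hi1, hi2⟩ := hi
      have hi1' : i.val ≠ j.val := Fin.val_ne_of_ne hi1
      have hi2' : i.val ≠ j.val + 1 := Fin.val_ne_of_ne hi2
      have hz0 : c (Fin.contractNth i.castSucc (· * ·) t) = 0 := by
        apply hv
        rcases lt_or_gt_of_ne hi1' with hilt | higt
        · refine ⟨⟨j.val, hjn⟩, ?_⟩
          rw [Fin.contractNth_apply_of_gt _ _ _ _ (by simpa using hilt)]
          rw [show t ((⟨j.val, hjn⟩ : Fin n)).succ = t ⟨j.val + 1, by omega⟩ from rfl, htz]
          exact hz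
        · refine ⟨j', ?_⟩
          have hig : (j'.val : ℕ) < i.castSucc.val := by
            show j.val + 1 < i.val; omega
          rw [Fin.contractNth_apply_of_lt _ _ _ _ hig]
          rw [show t (j' : Fin n).castSucc = t ⟨j.val + 1, by omega⟩ from rfl, htz]
          exact hz
      rw [hz0, smul_zero]
  rw [h1, h3, hsum, smul_zero, zero_add, add_zero] at hteq
  apply neg_one_pow_smul_cancel (j.val + 1)
  have hpow : ((-1:ℤ))^(j'.val+1) = -((-1:ℤ))^(j.val+1) := by
    show ((-1:ℤ))^(j.val+1+1) = -((-1:ℤ))^(j.val+1); ring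
  rw [hpow, neg_smul, add_neg_eq_zero] at hteq
  exact hteq



lemma update_invariant (lam : Ghat →* G) {n : ℕ} (c : (Fin n → Ghat) → A)
    (hc : cochainD n c = 0)
    (hv : ∀ h : Fin n → Ghat, (∃ i, h i ∈ lam.ker) → c h = 0) :
    ∀ (m : ℕ) (j : Fin n), n - 1 - j.val = m → ∀ z ∈ lam.ker, ∀ h : Fin n → Ghat,
      c (Function.update h j (h j * z)) = c h := by
  intro m
  induction m with
  | zero =>
    intro j hjm z hz h
    exact step_last lam c hc hv j (by omega) z hz h
  | succ m ih =>
    intro j hjm z hz h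
    have hj : j.val + 1 < n := by omega
    set j' : Fin n := ⟨j.val + 1, hj⟩ with hj'def
    have e1 := step_lt lam c hc hv j hj z hz h
    have hz' : (h j')⁻¹ * z * h j' ∈ lam.ker := by
      have hz1 : lam z = 1 := hz
      show lam ((h j')⁻¹ * z * h j') = 1
      rw [map_mul, map_mul, hz1, map_inv, mul_one, inv_mul_cancel]
    have e2 := ih j' (by show n - 1 - (j.val + 1) = m; omega) _ hz' h
    rw [e1, show z * h j' = h j' * ((h j')⁻¹ * z * h j') from by group]
    exact e2

lemma descend (lam : Ghat →* G) {n : ℕ} (c : (Fin n → Ghat) → A)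
    (hc : cochainD n c = 0)
    (hv : ∀ h : Fin n → Ghat, (∃ i, h i ∈ lam.ker) → c h = 0)
    (h h' : Fin n → Ghat) (hhh : ∀ i, lam (h i) = lam (h' i)) :
    c h' = c h := by
  have key : ∀ S : Finset (Fin n), c (S.piecewise h' h) = c h := by
    intro S
    induction S using Finset.induction_on with
    | empty => simp
    | @insert a S ha ih =>
      rw [Finset.piecewise_insert]
      have hga : (S.piecewise h' h) a = h a := Finset.piecewise_eq_of_notMem _ _ _ ha
      have hzk : (h a)⁻¹ * h' a ∈ lam.ker := by
        show lam ((h a)⁻¹ * h' a) = 1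
        rw [map_mul, map_inv, hhh a, inv_mul_cancel]
      have : h' a = (S.piecewise h' h) a * ((h a)⁻¹ * h' a) := by
        rw [hga]; group
      rw [this, update_invariant lam c hc hv (n - 1 - a.val) a rfl _ hzk]
      exact ih
  have := key Finset.univ
  rwa [Finset.piecewise_univ] at this

lemma contractNth_comp (lam : Ghat →* G) {n : ℕ} (p : Fin (n+1)) (h : Fin (n+1) → Ghat) :
    (fun i => lam (Fin.contractNth p (· * ·) h i))
      = Fin.contractNth p (· * ·) (fun i => lam (h i)) := by
  funext k
  rcases lt_trichotomy (k : ℕ) (p : ℕ) with hk | hk | hk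
  · rw [Fin.contractNth_apply_of_lt _ _ _ _ hk, Fin.contractNth_apply_of_lt _ _ _ _ hk]
  · rw [Fin.contractNth_apply_of_eq _ _ _ _ hk, Fin.contractNth_apply_of_eq _ _ _ _ hk, map_mul]
  · rw [Fin.contractNth_apply_of_gt _ _ _ _ hk, Fin.contractNth_apply_of_gt _ _ _ _ hk]

lemma cochainD_pullback (lam : Ghat →* G) {n : ℕ} (θ : (Fin n → G) → A) :
    cochainD n (fun h : Fin n → Ghat => θ fun i => lam (h i)) =
      fun h : Fin (n+1) → Ghat => cochainD n θ (fun i => lam (h i)) := by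
  funext h
  simp only [cochainD]
  congr 1
  · congr 1
    apply Finset.sum_congr rfl
    intro i _
    rw [contractNth_comp lam]

end Aux

/-- Pullback along a surjective group homomorphism `λ : Ĝ → G` is a bijection from the
normalized `n`-cocycles on `G` (those vanishing whenever some entry is `1`) onto the
`n`-cocycles on `Ĝ` vanishing whenever some entry lies in `ker λ`. -/
theorem pullback_bijOn_normalized_cocycles {Ghat G : Type*} [Group Ghat] [Group G]
    (lam : Ghat →* G) (hlam : Function.Surjective lam)
    (A : Type*) [AddCommGroup A] (n : ℕ) (hn : 1 ≤ n) :
    Set.BijOn (fun (θ : (Fin n → G) → A) => fun h : Fin n → Ghat => θ (fun i => lam (h i)))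
      {θ : (Fin n → G) → A |
        cochainD n θ = 0 ∧ ∀ h : Fin n → G, (∃ i, h i = 1) → θ h = 0}
      {c : (Fin n → Ghat) → A |
        cochainD n c = 0 ∧ ∀ h : Fin n → Ghat, (∃ i, h i ∈ lam.ker) → c h = 0} := by
  set s : G → Ghat := Function.surjInv hlam with hsdef
  have hs : ∀ x, lam (s x) = x := fun x => Function.surjInv_eq hlam x
  refine ⟨?_, ?_, ?_⟩
  · rintro θ ⟨hθd, hθn⟩
    refine ⟨?_, ?_⟩
    · rw [cochainD_pullback lam θ]
      funext h
      rw [hθd]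
      rfl
    · rintro h ⟨i, hi⟩
      exact hθn _ ⟨i, hi⟩
  · rintro θ _ θ' _ heq
    funext g
    have := congrFun heq (fun i => s (g i))
    simpa only [hs] using this
  · rintro c ⟨hcd, hcv⟩
    set θ : (Fin n → G) → A := fun g => c (fun i => s (g i)) with hθdef
    have hpull : (fun h : Fin n → Ghat => θ (fun i => lam (h i))) = c := by
      funext h
      exact descend lam c hcd hcv h (fun i => s (lam (h i))) (fun i => (hs (lam (h i))).symm)
    refine ⟨θ, ⟨?_, ?_⟩, hpull⟩
    · have h0 : cochainD n (fun h : Fin n → Ghat => θ (fun i => lam (h i))) = 0 := by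
        rw [hpull]; exact hcd
      rw [cochainD_pullback lam θ] at h0
      funext g
      have := congrFun h0 (fun i => s (g i))
      simpa only [hs, Pi.zero_apply] using this
    · rintro g ⟨i, hi⟩
      apply hcv
      refine ⟨i, ?_⟩
      show lam (s (g i)) = 1
      rw [hs, hi]
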